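/- For n ≥ 1, the iterated resultant R_n(x) of f(x,y) = y^4(x-1)^4 + 8x(x^2+1) is a monic polynomial in ℤ[x] of degree 2·4^n. -/

import Mathlib

open Polynomial

open Polynomial

/-- The Sylvester matrix of `p` and `q`, regarded as polynomials of degrees `m`
and `n` respectively: the first `n` rows are shifted copies of the coefficients of
`p`, the remaining `m` rows are shifted copies of the coefficients of `q`. -/
def sylvesterMatrix {R : Type*} [CommRing R] (p q : Polynomial R) (m n : ℕ) :
    Matrix (Fin (m + n)) (Fin (m + n)) R :=
  Matrix.of fun i j =>
    if (i : ℕ) < n then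
      (if (i : ℕ) ≤ (j : ℕ) ∧ (j : ℕ) ≤ m + (i : ℕ) then p.coeff (m + (i : ℕ) - j) else 0)
    else
      (if (i : ℕ) - n ≤ (j : ℕ) ∧ (j : ℕ) ≤ n + ((i : ℕ) - n) then
        q.coeff (n + ((i : ℕ) - n) - j) else 0)

/-- The resultant of two polynomials, as the determinant of their Sylvester matrix. -/
noncomputable def resultant {R : Type*} [CommRing R] (p q : Polynomial R) : R :=
  (sylvesterMatrix p q p.natDegree q.natDegree).det

/-- `f(x, x₁) = x₁^4 (x-1)^4 + 8x(x²+1)` as a polynomial in `x₁` (outer variable)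
over `ℤ[x]`.  This is `R⁽¹⁾(x, x₁)`. -/
noncomputable def fIter : Polynomial (Polynomial ℤ) :=
  X ^ 4 * C ((X - 1) ^ 4) + C (8 * X * (X ^ 2 + 1))

/-- `f(x_{k-1}, x_k)` viewed as a polynomial in the resultant variable `x_{k-1}`
(outer variable) with coefficients in `ℤ[x][x_k]`. -/
noncomputable def fRes : Polynomial (Polynomial (Polynomial ℤ)) :=
  C ((X : Polynomial (Polynomial ℤ)) ^ 4) * (X - 1) ^ 4 + 8 * X * (X ^ 2 + 1)

/-- The iterated resultants: `RIter 0 = R⁽¹⁾(x, x₁) = f(x, x₁)`, and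
`RIter k = R⁽ᵏ⁺¹⁾(x, x_{k+1}) = Res_{x_k}(R⁽ᵏ⁾(x, x_k), f(x_k, x_{k+1}))`.
`RIter (n-1)` is a polynomial in `x_n` (outer variable) over `ℤ[x]`. -/
noncomputable def RIter : ℕ → Polynomial (Polynomial ℤ)
  | 0 => fIter
  | k + 1 => _root_.resultant ((RIter k).map (C : Polynomial ℤ →+* Polynomial (Polynomial ℤ))) fRes


namespace IterAux

open Matrix Finset Equiv

/-- coefficient-wise degree bound is multiplicative -/
lemma xdeg_mul {A : Type*} [CommSemiring A] {g h : Polynomial (Polynomial A)} {a b : ℕ}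
    (hg : ∀ j, ((g.coeff j)).natDegree ≤ a) (hh : ∀ j, ((h.coeff j)).natDegree ≤ b) :
    ∀ j, (((g * h).coeff j)).natDegree ≤ a + b := by
  intro j
  rw [Polynomial.coeff_mul]
  refine Polynomial.natDegree_sum_le_of_forall_le _ _ fun p hp => ?_
  exact (Polynomial.natDegree_mul_le).trans (add_le_add (hg _) (hh _))

lemma xdeg_prod {A : Type*} [CommSemiring A] {ι : Type*} (s : Finset ι)
    (f : ι → Polynomial (Polynomial A)) (e : ι → ℕ)
    (h : ∀ i ∈ s, ∀ j, (((f i).coeff j)).natDegree ≤ e i) :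
    ∀ j, (((∏ i ∈ s, f i).coeff j)).natDegree ≤ ∑ i ∈ s, e i := by
  classical
  induction s using Finset.induction_on with
  | empty =>
      intro j
      simp only [Finset.prod_empty, Finset.sum_empty, Polynomial.coeff_one]
      split <;> simp
  | @insert a s ha ih =>
      rw [Finset.prod_insert ha, Finset.sum_insert ha]
      exact xdeg_mul (h a (Finset.mem_insert_self a s))
        (ih fun i hi j => h i (Finset.mem_insert_of_mem hi) j)

lemma natDegree_det_le {A : Type*} [CommRing A] {m : ℕ}
    (N : Matrix (Fin m) (Fin m) (Polynomial A)) (w : Fin m → ℕ)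
    (h : ∀ i j, (N i j).natDegree ≤ w i) :
    N.det.natDegree ≤ ∑ i, w i := by
  rw [Matrix.det_apply']
  refine Polynomial.natDegree_sum_le_of_forall_le _ _ fun σ _ => ?_
  refine Polynomial.natDegree_mul_le.trans ?_
  have h1 : (((Equiv.Perm.sign σ : ℤ) : Polynomial A)).natDegree = 0 :=
    Polynomial.natDegree_intCast _
  rw [h1, zero_add]
  refine Polynomial.natDegree_prod_le _ _ |>.trans ?_
  calc ∑ i, (N (σ i) i).natDegree ≤ ∑ i, w (σ i) :=
        Finset.sum_le_sum fun i _ => h (σ i) i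
    _ = ∑ i, w i := Equiv.sum_comp σ w

lemma sum_fin_ite (s k : ℕ) (hk : k ≤ s) (a b : ℕ) :
    (∑ i : Fin s, if (i : ℕ) < k then a else b) = k * a + (s - k) * b := by
  rw [Fin.sum_univ_eq_sum_range (fun t => if t < k then a else b) s,
    ← Finset.sum_range_add_sum_Ico _ hk]
  have h1 : (∑ t ∈ Finset.range k, if t < k then a else b) = k * a := by
    rw [Finset.sum_congr rfl fun t ht => if_pos (Finset.mem_range.mp ht)]
    simp [mul_comm]
  have h2 : (∑ t ∈ Finset.Ico k s, if t < k then a else b) = (s - k) * b := by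
    rw [Finset.sum_congr rfl fun t ht => if_neg (by
      have := (Finset.mem_Ico.mp ht).1; omega)]
    simp [Nat.card_Ico, mul_comm]
  rw [h1, h2]

lemma prod_fin_ite {β : Type*} [CommMonoid β] (s k : ℕ) (hk : k ≤ s) (a b : β) :
    (∏ i : Fin s, if (i : ℕ) < k then a else b) = a ^ k * b ^ (s - k) := by
  rw [Fin.prod_univ_eq_prod_range (fun t => if t < k then a else b) s,
    ← Finset.prod_range_mul_prod_Ico _ hk]
  have h1 : (∏ t ∈ Finset.range k, if t < k then a else b) = a ^ k := by
    rw [Finset.prod_congr rfl fun t ht => if_pos (Finset.mem_range.mp ht)]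
    simp
  have h2 : (∏ t ∈ Finset.Ico k s, if t < k then a else b) = b ^ (s - k) := by
    rw [Finset.prod_congr rfl fun t ht => if_neg (by
      have := (Finset.mem_Ico.mp ht).1; omega)]
    simp [Nat.card_Ico]
  rw [h1, h2]

/-- a permutation of `Fin m` satisfying `σ i ≥ i` everywhere is the identity -/
lemma perm_eq_one_of_le {m : ℕ} (σ : Equiv.Perm (Fin m))
    (h : ∀ i : Fin m, (i : ℕ) ≤ (σ i : ℕ)) : σ = 1 := by
  have hsum : (∑ i : Fin m, ((σ i : ℕ))) = ∑ i : Fin m, (i : ℕ) :=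
    Equiv.sum_comp σ (fun i : Fin m => (i : ℕ))
  have : ∀ i : Fin m, ((i : ℕ)) = ((σ i : ℕ)) := by
    by_contra hc
    push_neg at hc
    obtain ⟨i₀, hi₀⟩ := hc
    have hlt : (∑ i : Fin m, ((i : ℕ))) < ∑ i : Fin m, ((σ i : ℕ)) :=
      Finset.sum_lt_sum (fun i _ => h i) ⟨i₀, Finset.mem_univ _, lt_of_le_of_ne (h i₀) hi₀⟩
    omega
  ext i
  have h2 := this i
  simp only [Equiv.Perm.one_apply]
  exact h2.symm

section FResFacts

lemma fRes_eq : fRes = C ((X : Polynomial (Polynomial ℤ))^4) * X^4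
    + C (C 8 - C 4 * (X : Polynomial (Polynomial ℤ))^4) * X^3
    + C (C 6 * (X : Polynomial (Polynomial ℤ))^4) * X^2
    + C (C 8 - C 4 * (X : Polynomial (Polynomial ℤ))^4) * X^1
    + C ((X : Polynomial (Polynomial ℤ))^4) * X^0 := by
  unfold fRes
  simp only [_root_.map_sub, _root_.map_mul, _root_.map_add, map_ofNat, _root_.map_pow,
    _root_.map_one]
  ring

lemma fRes_coeff (t : ℕ) : fRes.coeff t =
    if t = 0 ∨ t = 4 then (X : Polynomial (Polynomial ℤ))^4
    else if t = 1 ∨ t = 3 then C 8 - C 4 * (X : Polynomial (Polynomial ℤ))^4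
    else if t = 2 then C 6 * (X : Polynomial (Polynomial ℤ))^4 else 0 := by
  rw [fRes_eq]
  rcases t with _|_|_|_|_|t <;>
    · simp only [coeff_add, coeff_mul_X_pow', coeff_C]
      norm_num
      try (split_ifs <;> first | rfl | omega | simp)

lemma fRes_coeff_natDegree_le (t : ℕ) : (fRes.coeff t).natDegree ≤ 4 := by
  rw [fRes_coeff]
  split_ifs <;> first
    | simp
    | compute_degree

lemma xdegA : ∀ j : ℕ, ((((X : Polynomial (Polynomial ℤ))^4).coeff j)).natDegree ≤ 0 := by
  intro j; rw [coeff_X_pow]; split <;> simp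

lemma xdegB : ∀ j : ℕ, (((C 8 - C 4 * (X : Polynomial (Polynomial ℤ))^4).coeff j)).natDegree ≤ 0 := by
  intro j
  simp only [coeff_sub, coeff_C, coeff_C_mul, coeff_X_pow, mul_ite, mul_one, mul_zero]
  split_ifs <;> first | (exfalso; omega) | simp

lemma xdegC : ∀ j : ℕ, (((C 6 * (X : Polynomial (Polynomial ℤ))^4).coeff j)).natDegree ≤ 0 := by
  intro j
  simp only [coeff_C_mul, coeff_X_pow, mul_ite, mul_one, mul_zero]
  split_ifs <;> simp

lemma fRes_xdeg (t j : ℕ) : ((fRes.coeff t).coeff j).natDegree ≤ 0 := by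
  rw [fRes_coeff]
  split_ifs
  · exact xdegA j
  · exact xdegB j
  · exact xdegC j
  · simp

lemma fRes_coeff_zero : fRes.coeff 0 = (X : Polynomial (Polynomial ℤ))^4 := by
  rw [fRes_coeff]; norm_num

lemma fRes_natDegree : fRes.natDegree = 4 := by
  refine le_antisymm ?_ (le_natDegree_of_ne_zero ?_)
  · rw [fRes_eq]
    compute_degree
  · rw [fRes_coeff]
    norm_num

end FResFacts


section Step

lemma coeffC_xdeg (r : Polynomial ℤ) (jz : ℕ) :
    (((C r : Polynomial (Polynomial ℤ)).coeff jz)).natDegree ≤ r.natDegree := by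
  rw [coeff_C]; split <;> simp

lemma step (P : Polynomial (Polynomial ℤ)) (d : ℕ) (hd : 1 ≤ d)
    (hP : P.natDegree = d)
    (hmon : (P.coeff d).Monic) (hdeg : (P.coeff d).natDegree = d)
    (hlow : ∀ j, j ≠ d → (P.coeff j).natDegree < d) :
    (_root_.resultant (P.map (C : Polynomial ℤ →+* Polynomial (Polynomial ℤ))) fRes).natDegree = 4*d ∧
    ((_root_.resultant (P.map (C : Polynomial ℤ →+* Polynomial (Polynomial ℤ))) fRes).coeff (4*d)).Monic ∧
    ((_root_.resultant (P.map (C : Polynomial ℤ →+* Polynomial (Polynomial ℤ))) fRes).coeff (4*d)).natDegree = 4*d ∧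
    (∀ j, j ≠ 4*d →
      ((_root_.resultant (P.map (C : Polynomial ℤ →+* Polynomial (Polynomial ℤ))) fRes).coeff j).natDegree < 4*d) := by
  classical
  set p : Polynomial (Polynomial (Polynomial ℤ)) := P.map C with hp
  have hpd : p.natDegree = d := by
    rw [hp, natDegree_map_eq_of_injective Polynomial.C_injective, hP]
  have hqd : fRes.natDegree = 4 := fRes_natDegree
  set M := sylvesterMatrix p fRes p.natDegree fRes.natDegree with hM
  have hres : _root_.resultant p fRes = M.det := by rw [hM]; rfl
  have hsz : p.natDegree + fRes.natDegree = d + 4 := by rw [hpd, hqd]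
  have hPcoeff : ∀ t, p.coeff t = C (P.coeff t) := fun t => coeff_map _ _
  have hPbound : ∀ t, (P.coeff t).natDegree ≤ d := by
    intro t
    by_cases ht : t = d
    · rw [ht, hdeg]
    · exact (hlow t ht).le
  have entryP : ∀ i j : Fin (p.natDegree + fRes.natDegree), (i : ℕ) < 4 →
      M i j = if (i:ℕ) ≤ (j:ℕ) ∧ (j:ℕ) ≤ d + (i:ℕ) then C (P.coeff (d + (i:ℕ) - (j:ℕ))) else 0 := by
    intro i j hi
    rw [hM]
    show (Matrix.of _) i j = _
    rw [Matrix.of_apply]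
    generalize (i : ℕ) = a at hi ⊢
    generalize (j : ℕ) = b
    rw [if_pos (by omega : a < fRes.natDegree), hpd]
    split_ifs with h
    · rw [hPcoeff]
    · rfl
  have entryQ : ∀ i j : Fin (p.natDegree + fRes.natDegree), 4 ≤ (i : ℕ) →
      M i j = if (i:ℕ) - 4 ≤ (j:ℕ) ∧ (j:ℕ) ≤ (i:ℕ) then fRes.coeff ((i:ℕ) - (j:ℕ)) else 0 := by
    intro i j hi
    rw [hM]
    show (Matrix.of _) i j = _
    rw [Matrix.of_apply]
    generalize (i : ℕ) = a at hi ⊢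
    generalize (j : ℕ) = b
    rw [if_neg (by omega : ¬ a < fRes.natDegree), hqd]
    have h1 : 4 + (a - 4) = a := by omega
    rw [h1]
  -- z-degree bound on entries
  have hw : ∀ i j : Fin (p.natDegree + fRes.natDegree),
      (M i j).natDegree ≤ (fun i : Fin (p.natDegree + fRes.natDegree) =>
        if (i:ℕ) < 4 then 0 else 4) i := by
    intro i j
    by_cases hi : (i:ℕ) < 4
    · simp only [if_pos hi]
      rw [entryP i j hi]
      split_ifs with h
      · simp
      · simp
    · simp only [if_neg hi]
      rw [entryQ i j (by omega)]
      split_ifs with h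
      · exact fRes_coeff_natDegree_le _
      · simp
  have hdegdet : (M.det).natDegree ≤ 4 * d := by
    have h := natDegree_det_le M _ hw
    have h2 : ∑ i : Fin (p.natDegree + fRes.natDegree),
        (if (i:ℕ) < 4 then 0 else 4) = 4 * d := by
      rw [sum_fin_ite _ 4 (by omega) 0 4, hsz]
      omega
    rw [h2] at h
    exact h
  -- identity permutation product
  have hdiag : (∏ i : Fin (p.natDegree + fRes.natDegree), M i i)
      = C ((P.coeff d)^4) * X^(4*d) := by
    have h1 : ∀ i : Fin (p.natDegree + fRes.natDegree),
        M i i = if (i:ℕ) < 4 then C (P.coeff d) else X^4 := by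
      intro i
      by_cases hi : (i:ℕ) < 4
      · rw [entryP i i hi, if_pos hi, if_pos ⟨le_refl _, by omega⟩, Nat.add_sub_cancel]
      · rw [entryQ i i (by omega), if_neg hi, if_pos ⟨by omega, le_refl _⟩, Nat.sub_self,
          fRes_coeff_zero]
    rw [Finset.prod_congr rfl (fun i _ => h1 i), prod_fin_ite _ 4 (by omega) _ _,
      ← map_pow, ← pow_mul]
    congr 2
    rw [hsz]
    omega
  -- per-permutation bound for non-identity permutations
  have key : ∀ σ : Equiv.Perm (Fin (p.natDegree + fRes.natDegree)), σ ≠ 1 →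
      ∀ jz, (((∏ i, M (σ i) i).coeff jz)).natDegree ≤ 4 * d - 1 := by
    intro σ hσ jz
    by_cases hall : ∀ i : Fin (p.natDegree + fRes.natDegree), (i:ℕ) ≤ ((σ i : ℕ))
    · exact absurd (perm_eq_one_of_le σ hall) hσ
    push_neg at hall
    obtain ⟨i₀, hi₀⟩ := hall
    by_cases hrow : ((σ i₀ : ℕ)) < 4
    · -- the row σ i₀ is a P-row with a strictly smaller degree bound
      have hb : ∀ i ∈ Finset.univ, ∀ jz' : ℕ, ((M (σ i) i).coeff jz').natDegree ≤
          (if ((σ i : ℕ)) < 4 then (if i = i₀ then d - 1 else d) else 0) := by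
        intro i _ jz'
        by_cases h1 : ((σ i : ℕ)) < 4
        · simp only [if_pos h1]
          rw [entryP (σ i) i h1]
          split_ifs with hcond h3 h3
          · -- i = i₀
            refine (coeffC_xdeg _ _).trans ?_
            have hne : (d + ((σ i : ℕ)) - (i:ℕ)) ≠ d := by
              subst h3
              omega
            have := hlow _ hne
            omega
          · refine (coeffC_xdeg _ _).trans (hPbound _)
          · simp
          · simp
        · simp only [if_neg h1]
          rw [entryQ (σ i) i (by omega)]
          split_ifs with hcond
          · exact fRes_xdeg _ _
          · simp
      refine (xdeg_prod Finset.univ (fun i => M (σ i) i)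
        (fun i => if ((σ i : ℕ)) < 4 then (if i = i₀ then d - 1 else d) else 0) hb jz).trans ?_
      have hlt : (∑ i : Fin (p.natDegree + fRes.natDegree),
          if ((σ i : ℕ)) < 4 then (if i = i₀ then d - 1 else d) else 0)
          < ∑ i : Fin (p.natDegree + fRes.natDegree),
          (if ((σ i : ℕ)) < 4 then d else 0) := by
        refine Finset.sum_lt_sum (fun i _ => ?_) ⟨i₀, Finset.mem_univ _, ?_⟩
        · split_ifs <;> omega
        · rw [if_pos hrow, if_pos hrow, if_pos rfl]
          omega
      have heq : (∑ i : Fin (p.natDegree + fRes.natDegree),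
          (if ((σ i : ℕ)) < 4 then d else 0)) = 4 * d := by
        have hcomp := Equiv.sum_comp σ
          (fun r : Fin (p.natDegree + fRes.natDegree) => if ((r : ℕ)) < 4 then d else 0)
        rw [hcomp, sum_fin_ite _ 4 (by omega) d 0, hsz]
        omega
      omega
    · -- the row σ i₀ is a Q-row and the entry vanishes
      have hzero : M (σ i₀) i₀ = 0 := by
        rw [entryQ (σ i₀) i₀ (by omega), if_neg (by omega)]
      have hz2 : (∏ i, M (σ i) i) = 0 := Finset.prod_eq_zero (Finset.mem_univ i₀) hzero
      rw [hz2]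
      simp
  -- coefficients of the determinant
  have hcoeffdet : ∀ jz, (M.det).coeff jz =
      (if jz = 4*d then (P.coeff d)^4 else 0) +
      ∑ σ ∈ (Finset.univ.erase (1 : Equiv.Perm (Fin (p.natDegree + fRes.natDegree)))),
        (((Equiv.Perm.sign σ : ℤ) : Polynomial ℤ)) * ((∏ i, M (σ i) i).coeff jz) := by
    intro jz
    rw [Matrix.det_apply', Polynomial.finset_sum_coeff,
      ← Finset.add_sum_erase _ _ (Finset.mem_univ (1 : Equiv.Perm (Fin (p.natDegree + fRes.natDegree))))]
    congr 1
    · have h1 : (∏ i, M ((1 : Equiv.Perm (Fin (p.natDegree + fRes.natDegree))) i) i)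
          = C ((P.coeff d)^4) * X^(4*d) := by
        rw [← hdiag]
        exact Finset.prod_congr rfl fun i _ => rfl
      rw [h1]
      simp only [Equiv.Perm.sign_one, Units.val_one, Int.cast_one, one_mul,
        Polynomial.coeff_C_mul, Polynomial.coeff_X_pow, mul_ite, mul_one, mul_zero]
    · refine Finset.sum_congr rfl fun σ _ => ?_
      rw [show (((Equiv.Perm.sign σ : ℤ)) : Polynomial (Polynomial ℤ))
          = C (((Equiv.Perm.sign σ : ℤ)) : Polynomial ℤ) by rw [Polynomial.C_eq_intCast],
        coeff_C_mul]
  -- the error sum bound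
  have hEsum : ∀ jz, ((∑ σ ∈ (Finset.univ.erase (1 : Equiv.Perm (Fin (p.natDegree + fRes.natDegree)))),
      (((Equiv.Perm.sign σ : ℤ) : Polynomial ℤ)) * ((∏ i, M (σ i) i).coeff jz))).natDegree
      ≤ 4*d - 1 := by
    intro jz
    refine Polynomial.natDegree_sum_le_of_forall_le _ _ fun σ hσ => ?_
    have hσ1 : σ ≠ 1 := (Finset.mem_erase.mp hσ).1
    refine Polynomial.natDegree_mul_le.trans ?_
    rw [Polynomial.natDegree_intCast, zero_add]
    exact key σ hσ1 jz
  have hmon4 : ((P.coeff d)^4).Monic := hmon.pow 4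
  have hdeg4 : ((P.coeff d)^4).natDegree = 4*d := by
    rw [hmon.natDegree_pow, hdeg]
  have hcoefftop : ((M.det).coeff (4*d)).Monic ∧ ((M.det).coeff (4*d)).natDegree = 4*d := by
    rw [hcoeffdet (4*d), if_pos rfl]
    have hlt : (∑ σ ∈ (Finset.univ.erase (1 : Equiv.Perm (Fin (p.natDegree + fRes.natDegree)))),
        (((Equiv.Perm.sign σ : ℤ) : Polynomial ℤ)) * ((∏ i, M (σ i) i).coeff (4*d))).natDegree
        < ((P.coeff d)^4).natDegree := by
      rw [hdeg4]
      have := hEsum (4*d)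
      omega
    constructor
    · exact hmon4.add_of_left (Polynomial.degree_lt_degree hlt)
    · rw [Polynomial.natDegree_add_eq_left_of_natDegree_lt hlt, hdeg4]
  have hcoefflow : ∀ j, j ≠ 4*d → ((M.det).coeff j).natDegree < 4*d := by
    intro j hj
    rw [hcoeffdet j, if_neg hj, zero_add]
    have := hEsum j
    omega
  have hdetdeg : (M.det).natDegree = 4*d := by
    refine le_antisymm hdegdet (le_natDegree_of_ne_zero ?_)
    exact hcoefftop.1.ne_zero
  rw [hres]
  exact ⟨hdetdeg, hcoefftop.1, hcoefftop.2, hcoefflow⟩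

end Step

section Base

lemma fIter_eq : fIter = C ((X - 1 : Polynomial ℤ)^4) * X^4
    + C (8*(X : Polynomial ℤ)*(X^2+1)) * X^0 := by
  unfold fIter
  ring

lemma fIter_coeff (t : ℕ) : fIter.coeff t =
    if t = 4 then (X - 1 : Polynomial ℤ)^4
    else if t = 0 then 8*(X : Polynomial ℤ)*(X^2+1) else 0 := by
  rw [fIter_eq]
  rcases t with _|_|_|_|_|t <;>
    · simp only [coeff_add, coeff_mul_X_pow', coeff_C]
      norm_num
      try (split_ifs <;> first | rfl | omega | simp)

lemma base : fIter.natDegree = 4 ∧ (fIter.coeff 4).Monic ∧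
    (fIter.coeff 4).natDegree = 4 ∧ ∀ j, j ≠ 4 → (fIter.coeff j).natDegree < 4 := by
  have hXm : ((X - 1 : Polynomial ℤ)^4).Monic := by
    have h : (X - 1 : Polynomial ℤ) = X - C 1 := by rw [_root_.map_one]
    rw [h]
    exact (monic_X_sub_C 1).pow 4
  have hXd : ((X - 1 : Polynomial ℤ)^4).natDegree = 4 := by
    have h : (X - 1 : Polynomial ℤ) = X - C 1 := by rw [_root_.map_one]
    rw [h, (monic_X_sub_C (1:ℤ)).natDegree_pow, natDegree_X_sub_C, mul_one]
  have hc4 : fIter.coeff 4 = (X - 1 : Polynomial ℤ)^4 := by rw [fIter_coeff]; norm_num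
  refine ⟨?_, ?_, ?_, ?_⟩
  · refine le_antisymm ?_ (le_natDegree_of_ne_zero ?_)
    · refine natDegree_le_iff_coeff_eq_zero.mpr fun t ht => ?_
      rw [fIter_coeff, if_neg (by omega), if_neg (by omega)]
    · rw [hc4]
      exact hXm.ne_zero
  · rw [hc4]; exact hXm
  · rw [hc4, hXd]
  · intro j hj
    rw [fIter_coeff, if_neg hj]
    split_ifs with h0
    · have : (8*(X : Polynomial ℤ)*(X^2+1)).natDegree ≤ 3 := by compute_degree
      omega
    · simp

end Base

lemma inv (k : ℕ) : (RIter k).natDegree = 4^(k+1) ∧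
    ((RIter k).coeff (4^(k+1))).Monic ∧
    ((RIter k).coeff (4^(k+1))).natDegree = 4^(k+1) ∧
    ∀ j, j ≠ 4^(k+1) → ((RIter k).coeff j).natDegree < 4^(k+1) := by
  induction k with
  | zero =>
      have h : RIter 0 = fIter := rfl
      rw [h]
      simpa using base
  | succ k ih =>
      obtain ⟨h1, h2, h3, h4⟩ := ih
      have hd : 1 ≤ 4^(k+1) := Nat.one_le_pow _ _ (by norm_num)
      have hstep := step (RIter k) (4^(k+1)) hd h1 h2 h3 h4
      have hRe : RIter (k+1) = _root_.resultant ((RIter k).map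
        (C : Polynomial ℤ →+* Polynomial (Polynomial ℤ))) fRes := rfl
      have h44 : 4^(k+1+1) = 4 * 4^(k+1) := by ring
      rw [hRe, h44]
      exact hstep

end IterAux

theorem stmt_14 (n : ℕ) (hn : 1 ≤ n) :
    ((RIter (n - 1)).eval (X : Polynomial ℤ)).Monic ∧
    ((RIter (n - 1)).eval (X : Polynomial ℤ)).natDegree = 2 * 4 ^ n := by
  obtain ⟨m, rfl⟩ : ∃ m, n = m + 1 := ⟨n - 1, by omega⟩
  simp only [Nat.add_sub_cancel]
  obtain ⟨h1, h2, h3, h4⟩ := IterAux.inv m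
  have hD : 1 ≤ 4^(m+1) := Nat.one_le_pow _ _ (by norm_num)
  have heval : (RIter m).eval (X : Polynomial ℤ) =
      ∑ j ∈ Finset.range (4^(m+1)+1), (RIter m).coeff j * X^j := by
    rw [eval_eq_sum_range, h1]
  rw [heval, Finset.sum_range_succ]
  have htopm : ((RIter m).coeff (4^(m+1)) * (X : Polynomial ℤ)^(4^(m+1))).Monic :=
    h2.mul (monic_X_pow _)
  have htopd : ((RIter m).coeff (4^(m+1)) * (X : Polynomial ℤ)^(4^(m+1))).natDegree
      = 2 * 4^(m+1) := by
    rw [h2.natDegree_mul (monic_X_pow _), h3, natDegree_X_pow]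
    ring
  have hrest : (∑ j ∈ Finset.range (4^(m+1)), (RIter m).coeff j * (X : Polynomial ℤ)^j).natDegree
      < 2 * 4^(m+1) := by
    have hle : (∑ j ∈ Finset.range (4^(m+1)), (RIter m).coeff j * (X : Polynomial ℤ)^j).natDegree
        ≤ 2 * 4^(m+1) - 1 := by
      refine Polynomial.natDegree_sum_le_of_forall_le _ _ fun j hj => ?_
      have hj' : j < 4^(m+1) := Finset.mem_range.mp hj
      refine Polynomial.natDegree_mul_le.trans ?_
      rw [natDegree_X_pow]
      have := h4 j (by omega)
      omega
    omega
  have hlt : (∑ j ∈ Finset.range (4^(m+1)), (RIter m).coeff j * (X : Polynomial ℤ)^j).natDegree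
      < ((RIter m).coeff (4^(m+1)) * (X : Polynomial ℤ)^(4^(m+1))).natDegree := by
    rw [htopd]; exact hrest
  constructor
  · exact htopm.add_of_right (Polynomial.degree_lt_degree hlt)
  · rw [Polynomial.natDegree_add_eq_right_of_natDegree_lt hlt, htopd]
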